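/- For every real number z < 0, the function g(z) = ln(log₂(1+e^z)) satisfies 2·g(z) > g(2z). -/

import Mathlib

open Real Set

noncomputable def Gfun : ℝ → ℝ := fun z => Real.log (Real.log (1 + Real.exp z))

lemma one_lt_aux (z : ℝ) : (1:ℝ) < 1 + Real.exp z := by
  have := Real.exp_pos z; linarith

lemma log_aux_pos (z : ℝ) : 0 < Real.log (1 + Real.exp z) :=
  Real.log_pos (one_lt_aux z)

lemma hasDerivAt_G (z : ℝ) :
    HasDerivAt Gfun
      (Real.exp z / ((1 + Real.exp z) * Real.log (1 + Real.exp z))) z := by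
  have h1 : HasDerivAt (fun z : ℝ => 1 + Real.exp z) (Real.exp z) z :=
    (Real.hasDerivAt_exp z).const_add 1
  have hne : (1 : ℝ) + Real.exp z ≠ 0 := by have := one_lt_aux z; linarith
  have h2 : HasDerivAt (fun z : ℝ => Real.log (1 + Real.exp z))
      (Real.exp z / (1 + Real.exp z)) z := h1.log hne
  have h3 := h2.log (log_aux_pos z).ne'
  convert h3 using 1
  · rfl
  rw [div_div]

lemma phi_strictMono :
    StrictMonoOn (fun t : ℝ => (1 + t) * Real.log (1 + t) / t) (Set.Ioi 0) := by
  apply strictMonoOn_of_deriv_pos (convex_Ioi 0)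
  · apply ContinuousOn.div
    · apply ContinuousOn.mul (by fun_prop)
      apply Real.continuousOn_log.comp (by fun_prop)
      intro t ht
      simp only [Set.mem_compl_iff, Set.mem_singleton_iff]
      have : (0:ℝ) < t := ht
      intro h; rw [Set.mem_Ioi] at ht; linarith [h]
    · fun_prop
    · intro t ht; exact (Set.mem_Ioi.mp ht).ne'
  · intro t ht
    rw [interior_Ioi, Set.mem_Ioi] at ht
    have hne : (1:ℝ) + t ≠ 0 := by linarith
    have hN : HasDerivAt (fun t : ℝ => (1 + t) * Real.log (1 + t))
        (Real.log (1 + t) + 1) t := by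
      have h1 : HasDerivAt (fun t : ℝ => 1 + t) 1 t := (hasDerivAt_id t).const_add 1
      have h2 : HasDerivAt (fun t : ℝ => Real.log (1 + t)) (1 / (1 + t)) t := h1.log hne
      have := h1.mul h2
      rw [one_mul, mul_one_div_cancel hne] at this
      exact this
    have hD : HasDerivAt (fun t : ℝ => (1 + t) * Real.log (1 + t) / t)
        (((Real.log (1 + t) + 1) * t - (1 + t) * Real.log (1 + t) * 1) / t ^ 2) t :=
      hN.div (hasDerivAt_id t) ht.ne'
    rw [hD.deriv]
    have hlt : Real.log (1 + t) < t := by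
      have := Real.log_lt_sub_one_of_pos (by linarith : (0:ℝ) < 1 + t)
        (by intro h; apply ht.ne'; linarith)
      linarith
    apply div_pos _ (by positivity)
    nlinarith

lemma derivG_strictAnti : StrictAnti (deriv Gfun) := by
  intro a b hab
  rw [(hasDerivAt_G a).deriv, (hasDerivAt_G b).deriv]
  have hsa := Real.exp_pos a
  have hsb := Real.exp_pos b
  have hLa := log_aux_pos a
  have hLb := log_aux_pos b
  rw [div_lt_div_iff₀ (by positivity) (by positivity)]
  have hst : Real.exp a < Real.exp b := Real.exp_lt_exp.mpr hab
  have key := phi_strictMono (Set.mem_Ioi.mpr hsa) (Set.mem_Ioi.mpr hsb) hst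
  simp only at key
  rw [div_lt_div_iff₀ hsa hsb] at key
  nlinarith

lemma G_strictConcave : StrictConcaveOn ℝ Set.univ Gfun := by
  apply StrictAnti.strictConcaveOn_univ_of_deriv
  · rw [continuous_iff_continuousAt]
    exact fun z => (hasDerivAt_G z).differentiableAt.continuousAt
  · exact derivG_strictAnti

theorem stmt1 (z : ℝ) (hz : z < 0) :
    2 * Real.log (Real.logb 2 (1 + Real.exp z)) >
      Real.log (Real.logb 2 (1 + Real.exp (2 * z))) := by
  have hlog2 : (0:ℝ) < Real.log 2 := Real.log_pos (by norm_num)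
  have key := G_strictConcave.2 (Set.mem_univ (2*z)) (Set.mem_univ 0)
    (by intro h; simp at h; linarith) (by norm_num : (0:ℝ) < 1/2)
    (by norm_num : (0:ℝ) < 1/2) (by norm_num)
  have hmid : (1/2 : ℝ) • (2*z) + (1/2 : ℝ) • (0:ℝ) = z := by
    rw [smul_eq_mul, smul_eq_mul]; ring
  rw [hmid] at key
  have hG0 : Gfun 0 = Real.log (Real.log 2) := by
    unfold Gfun
    rw [Real.exp_zero]
    norm_num
  rw [hG0] at key
  simp only [smul_eq_mul] at key
  have e1 : Real.log (Real.logb 2 (1 + Real.exp z))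
      = Gfun z - Real.log (Real.log 2) := by
    rw [Real.logb, Real.log_div (log_aux_pos z).ne' hlog2.ne']; rfl
  have e2 : Real.log (Real.logb 2 (1 + Real.exp (2*z)))
      = Gfun (2*z) - Real.log (Real.log 2) := by
    rw [Real.logb, Real.log_div (log_aux_pos (2*z)).ne' hlog2.ne']; rfl
  rw [e1, e2]
  linarith
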